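/- Let μ be a nontrivial positive measure on the unit circle with CD kernels K_n. If |w| = 1, then every zero z of the polynomial z ↦ K_n(z,w;μ) satisfies |z| = 1. -/

import Mathlib

open MeasureTheory Complex Polynomial

/-- The Christoffel–Darboux kernel built from a family of polynomials. -/
noncomputable def CDkernel (φ : ℕ → Polynomial ℂ) (n : ℕ) (z w : ℂ) : ℂ :=
  ∑ j ∈ Finset.range (n + 1), (starRingEnd ℂ) ((φ j).eval w) * (φ j).eval z

/-- `φ` is the sequence of orthonormal polynomials (with positive leading coefficients)
of the measure `μ` on the unit circle. -/
def IsOPUC (μ : Measure ℂ) (φ : ℕ → Polynomial ℂ) : Prop :=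
  (∀ n, (φ n).degree = n) ∧
  (∀ n, 0 < ((φ n).leadingCoeff).re ∧ ((φ n).leadingCoeff).im = 0) ∧
  (∀ m n, ∫ ζ, (starRingEnd ℂ) ((φ m).eval ζ) * (φ n).eval ζ ∂μ =
    if m = n then 1 else 0)

/-- The CD kernel, as a polynomial in the first variable. -/
noncomputable def CDpoly (φ : ℕ → Polynomial ℂ) (n : ℕ) (w : ℂ) : Polynomial ℂ :=
  ∑ j ∈ Finset.range (n + 1), Polynomial.C ((starRingEnd ℂ) ((φ j).eval w)) * φ j

lemma CDpoly_eval (φ : ℕ → Polynomial ℂ) (n : ℕ) (w z : ℂ) :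
    (CDpoly φ n w).eval z = CDkernel φ n z w := by
  simp [CDpoly, CDkernel, Polynomial.eval_finset_sum]

lemma CDpoly_degree_le (φ : ℕ → Polynomial ℂ) (hdeg : ∀ m, (φ m).degree = m)
    (n : ℕ) (w : ℂ) : (CDpoly φ n w).degree ≤ n := by
  refine (Polynomial.degree_sum_le _ _).trans ?_
  refine Finset.sup_le fun j hj => ?_
  calc (Polynomial.C ((starRingEnd ℂ) ((φ j).eval w)) * φ j).degree
      ≤ (Polynomial.C ((starRingEnd ℂ) ((φ j).eval w))).degree + (φ j).degree :=
        Polynomial.degree_mul_le _ _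
    _ ≤ 0 + (φ j).degree := add_le_add_left Polynomial.degree_C_le _
    _ = (j : WithBot ℕ) := by rw [zero_add, hdeg j]
    _ ≤ (n : WithBot ℕ) :=
        (by exact_mod_cast Nat.lt_succ_iff.mp (Finset.mem_range.mp hj))

/-- A continuous function is integrable against a finite measure concentrated a.e.
on the unit circle. -/
lemma integrable_aux {E : Type*} [NormedAddCommGroup E]
    (μ : Measure ℂ) [IsFiniteMeasure μ] (hcirc : ∀ᵐ ζ ∂μ, ‖ζ‖ = 1)
    {f : ℂ → E} (hf : Continuous f) : Integrable f μ := by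
  obtain ⟨C, hC⟩ := (isCompact_sphere (0 : ℂ) 1).exists_bound_of_continuousOn
    hf.continuousOn
  refine Integrable.mono' (integrable_const C) hf.aestronglyMeasurable ?_
  filter_upwards [hcirc] with ζ hζ
  exact hC ζ (by simpa [mem_sphere_zero_iff_norm] using hζ)

/-- A polynomial vanishing a.e. w.r.t. a nontrivial measure is the zero polynomial. -/
lemma poly_eq_zero_of_ae (μ : Measure ℂ)
    (hnt : Set.Infinite {ζ : ℂ | ∀ ε > 0, μ (Metric.ball ζ ε) ≠ 0})
    (f : Polynomial ℂ) (h : ∀ᵐ ζ ∂μ, f.eval ζ = 0) : f = 0 := by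
  refine Polynomial.eq_zero_of_infinite_isRoot f (hnt.mono ?_)
  intro ζ hζ
  by_contra hne
  have hopen : IsOpen {x : ℂ | f.eval x ≠ 0} :=
    isOpen_compl_iff.mpr (isClosed_singleton.preimage f.continuous)
  obtain ⟨ε, hε, hball⟩ := Metric.isOpen_iff.mp hopen ζ hne
  have hnull : μ {x : ℂ | ¬ f.eval x = 0} = 0 := by
    simpa [ae_iff] using h
  exact hζ ε hε (le_antisymm (hnull ▸ measure_mono hball) (zero_le))

/-- Polynomials of degree ≤ n are spanned by φ 0, ..., φ n. -/
lemma span_aux (φ : ℕ → Polynomial ℂ) (hdeg : ∀ m, (φ m).degree = m) :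
    ∀ (n : ℕ) (q : Polynomial ℂ), q.degree ≤ n →
    ∃ c : ℕ → ℂ, q = ∑ i ∈ Finset.range (n + 1), Polynomial.C (c i) * φ i := by
  have hφne : ∀ m, φ m ≠ 0 := by
    intro m h0
    have := hdeg m
    rw [h0, Polynomial.degree_zero] at this
    exact absurd this (by simp)
  intro n
  induction n with
  | zero =>
    intro q hq
    have h0 : φ 0 = Polynomial.C ((φ 0).coeff 0) :=
      Polynomial.eq_C_of_degree_le_zero (le_of_eq (by simpa using hdeg 0))
    have hc0 : (φ 0).coeff 0 ≠ 0 := by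
      intro hc
      exact hφne 0 (by rw [h0, hc, map_zero])
    refine ⟨fun _ => q.coeff 0 / (φ 0).coeff 0, ?_⟩
    have hqC : q = Polynomial.C (q.coeff 0) := Polynomial.eq_C_of_degree_le_zero hq
    rw [Finset.sum_range_one, h0, ← Polynomial.C_mul]
    simp only [Polynomial.coeff_C, if_pos]
    rw [div_mul_cancel₀ _ hc0]
    exact hqC
  | succ n ih =>
    intro q hq
    have hnat : (φ (n + 1)).natDegree = n + 1 :=
      Polynomial.natDegree_eq_of_degree_eq_some (hdeg (n + 1))
    have hlc : (φ (n + 1)).coeff (n + 1) ≠ 0 := by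
      have h := Polynomial.leadingCoeff_ne_zero.mpr (hφne (n + 1))
      rwa [Polynomial.leadingCoeff, hnat] at h
    set a : ℂ := q.coeff (n + 1) / (φ (n + 1)).coeff (n + 1) with ha
    have hsub : (q - Polynomial.C a * φ (n + 1)).degree ≤ n := by
      rw [Polynomial.degree_le_iff_coeff_zero]
      intro m hm
      have hm' : n + 1 ≤ m := by exact_mod_cast Nat.cast_lt.mp (by exact_mod_cast hm)
      rcases eq_or_lt_of_le hm' with hEq | hlt
      · rw [Polynomial.coeff_sub, Polynomial.coeff_C_mul, ← hEq, ha,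
          div_mul_cancel₀ _ hlc, sub_self]
      · have hq1 : q.coeff m = 0 :=
          Polynomial.coeff_eq_zero_of_degree_lt (lt_of_le_of_lt hq (by exact_mod_cast hlt))
        have hq2 : (φ (n + 1)).coeff m = 0 :=
          Polynomial.coeff_eq_zero_of_degree_lt (by rw [hdeg (n + 1)]; exact_mod_cast hlt)
        simp [hq1, hq2]
    obtain ⟨c, hc⟩ := ih _ hsub
    refine ⟨Function.update c (n + 1) a, ?_⟩
    rw [Finset.sum_range_succ, Function.update_self]
    have heq : ∑ i ∈ Finset.range (n + 1), Polynomial.C (Function.update c (n + 1) a i) * φ i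
        = ∑ i ∈ Finset.range (n + 1), Polynomial.C (c i) * φ i := by
      refine Finset.sum_congr rfl fun i hi => ?_
      have : i < n + 1 := Finset.mem_range.mp hi
      rw [Function.update_of_ne (by omega) a c]
    rw [heq, ← hc]
    ring

/-- Reproducing property of the CD kernel. -/
lemma reproducing (μ : Measure ℂ) [IsFiniteMeasure μ] (hcirc : ∀ᵐ ζ ∂μ, ‖ζ‖ = 1)
    (φ : ℕ → Polynomial ℂ) (hdeg : ∀ m, (φ m).degree = m)
    (hortho : ∀ m k, ∫ ζ, (starRingEnd ℂ) ((φ m).eval ζ) * (φ k).eval ζ ∂μ =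
      if m = k then 1 else 0)
    (n : ℕ) (w : ℂ) (s : Polynomial ℂ) (hs : s.degree ≤ n) :
    ∫ ζ, (starRingEnd ℂ) ((CDpoly φ n w).eval ζ) * s.eval ζ ∂μ = s.eval w := by
  obtain ⟨c, hc⟩ := span_aux φ hdeg n s hs
  have key : ∀ ζ : ℂ, (starRingEnd ℂ) ((CDpoly φ n w).eval ζ) * s.eval ζ
      = ∑ j ∈ Finset.range (n + 1), ∑ i ∈ Finset.range (n + 1),
          ((φ j).eval w * c i) * ((starRingEnd ℂ) ((φ j).eval ζ) * (φ i).eval ζ) := by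
    intro ζ
    rw [hc]
    simp only [CDpoly, Polynomial.eval_finset_sum, Polynomial.eval_mul, Polynomial.eval_C,
      map_sum, map_mul, Complex.conj_conj, Finset.sum_mul_sum]
    refine Finset.sum_congr rfl fun j _ => Finset.sum_congr rfl fun i _ => by ring
  simp_rw [key]
  rw [integral_finset_sum _ (fun j _ => integrable_finset_sum _ (fun i _ =>
    integrable_aux μ hcirc (by continuity)))]
  have : ∀ j ∈ Finset.range (n + 1),
      (∫ ζ, ∑ i ∈ Finset.range (n + 1),
        ((φ j).eval w * c i) * ((starRingEnd ℂ) ((φ j).eval ζ) * (φ i).eval ζ) ∂μ)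
      = (φ j).eval w * c j := by
    intro j hj
    rw [integral_finset_sum _ (fun i _ => integrable_aux μ hcirc (by continuity))]
    have : ∀ i ∈ Finset.range (n + 1),
        (∫ ζ, ((φ j).eval w * c i) * ((starRingEnd ℂ) ((φ j).eval ζ) * (φ i).eval ζ) ∂μ)
        = ((φ j).eval w * c i) * (if j = i then 1 else 0) := by
      intro i _
      rw [integral_const_mul, hortho j i]
    rw [Finset.sum_congr rfl this]
    simp [Finset.sum_ite_eq, Finset.mem_range.mp hj, mul_ite]
  rw [Finset.sum_congr rfl this, hc]
  simp only [Polynomial.eval_finset_sum, Polynomial.eval_mul, Polynomial.eval_C]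
  exact Finset.sum_congr rfl fun j _ => by ring

lemma unimod (u v : ℂ) (hu : ‖u‖ = 1) : ‖(1:ℂ) - (starRingEnd ℂ) v * u‖ = ‖u - v‖ := by
  have h2 : u * (starRingEnd ℂ) u = 1 := by
    rw [Complex.mul_conj]
    rw [Complex.normSq_eq_norm_sq, hu]
    norm_num
  have h1 : (1 : ℂ) - (starRingEnd ℂ) v * u = u * (starRingEnd ℂ) (u - v) := by
    rw [map_sub, mul_sub, h2]; ring
  rw [h1, norm_mul, hu, one_mul, RCLike.norm_conj]

/-- If `|w| = 1`, every zero of `z ↦ K_n(z,w;μ)` lies on the unit circle. -/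
theorem cd_kernel_zeros_on_circle
    (μ : Measure ℂ) [IsFiniteMeasure μ]
    (hcirc : ∀ᵐ ζ ∂μ, ‖ζ‖ = 1)
    (hnt : Set.Infinite {ζ : ℂ | ∀ ε > 0, μ (Metric.ball ζ ε) ≠ 0})
    (φ : ℕ → Polynomial ℂ) (hφ : IsOPUC μ φ)
    (n : ℕ) (w : ℂ) (hw : ‖w‖ = 1)
    (z : ℂ) (hz : CDkernel φ n z w = 0) :
    ‖z‖ = 1 := by
  classical
  obtain ⟨hdeg, hlc, hortho⟩ := hφ
  by_cases hwz : z = w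
  · rw [hwz]; exact hw
  set p := CDpoly φ n w with hpdef
  have hpz : p.eval z = 0 := by rw [hpdef, CDpoly_eval]; exact hz
  have hpdeg : p.degree ≤ n := CDpoly_degree_le φ hdeg n w
  have hφ0 : (φ 0).eval w = (φ 0).leadingCoeff := by
    have h0 : φ 0 = Polynomial.C ((φ 0).coeff 0) :=
      Polynomial.eq_C_of_degree_le_zero (le_of_eq (by simpa using hdeg 0))
    conv_lhs => rw [h0]
    conv_rhs => rw [h0]
    simp
  have hφ0ne : (φ 0).eval w ≠ 0 := by
    rw [hφ0]
    intro h
    have := (hlc 0).1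
    rw [h] at this
    simpa using this
  obtain ⟨R, hRpos, hpwR⟩ : ∃ R : ℝ, 0 < R ∧ p.eval w = (R : ℂ) := by
    refine ⟨∑ j ∈ Finset.range (n + 1), Complex.normSq ((φ j).eval w), ?_, ?_⟩
    · refine Finset.sum_pos' (fun j _ => Complex.normSq_nonneg _)
        ⟨0, Finset.mem_range.mpr (Nat.succ_pos n), Complex.normSq_pos.mpr hφ0ne⟩
    · have : p.eval w = ∑ j ∈ Finset.range (n + 1),
          (starRingEnd ℂ) ((φ j).eval w) * ((φ j).eval w) := by
        rw [hpdef, CDpoly_eval]; rfl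
      rw [this]
      push_cast
      exact Finset.sum_congr rfl fun j _ => by rw [mul_comm, Complex.mul_conj]
  have hpw_ne : p.eval w ≠ 0 := by rw [hpwR]; exact_mod_cast hRpos.ne'
  have hpne : p ≠ 0 := fun h => hpw_ne (by simp [h])
  by_cases hcz : 1 - (starRingEnd ℂ) z * w = 0
  · have h1 : (starRingEnd ℂ) z * w = 1 := (sub_eq_zero.mp hcz).symm
    have h2 := congrArg norm h1
    rw [norm_mul, RCLike.norm_conj, hw, mul_one, norm_one] at h2
    exact h2
  -- main case
  set τ := (w - z) / (1 - (starRingEnd ℂ) z * w) with hτdef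
  have hτmul : τ * (1 - (starRingEnd ℂ) z * w) = w - z := div_mul_cancel₀ _ hcz
  have hτnorm : ‖τ‖ = 1 := by
    rw [hτdef, norm_div, unimod w z hw, div_self]
    intro h
    exact hwz (by simpa [sub_eq_zero, eq_comm] using norm_eq_zero.mp h)
  obtain ⟨q, hq⟩ := Polynomial.dvd_iff_isRoot.mpr hpz
  have hqne : q ≠ 0 := by rintro rfl; rw [mul_zero] at hq; exact hpne hq
  set pt := (Polynomial.C τ * (1 - Polynomial.C ((starRingEnd ℂ) z) * Polynomial.X)) * q
    with hptdef
  have hptw : pt.eval w = p.eval w := by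
    rw [hptdef, hq]
    simp only [Polynomial.eval_mul, Polynomial.eval_sub, Polynomial.eval_one,
      Polynomial.eval_C, Polynomial.eval_X]
    rw [hτmul]
  have hptdeg : pt.degree ≤ n := by
    have h1 : (Polynomial.C τ *
        (1 - Polynomial.C ((starRingEnd ℂ) z) * Polynomial.X) : Polynomial ℂ).degree ≤ 1 := by
      compute_degree
    calc pt.degree ≤ _ + q.degree := Polynomial.degree_mul_le _ _
      _ ≤ 1 + q.degree := add_le_add_left h1 _
      _ = p.degree := by rw [hq, Polynomial.degree_mul, Polynomial.degree_X_sub_C]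
      _ ≤ n := hpdeg
  have hI1 : ∫ ζ, (starRingEnd ℂ) (p.eval ζ) * p.eval ζ ∂μ = (R : ℂ) := by
    rw [← hpwR]; exact reproducing μ hcirc φ hdeg hortho n w p hpdeg
  have hI2 : ∫ ζ, (starRingEnd ℂ) (p.eval ζ) * pt.eval ζ ∂μ = (R : ℂ) := by
    rw [← hpwR, ← hptw]; exact reproducing μ hcirc φ hdeg hortho n w pt hptdeg
  have hI3 : ∫ ζ, (starRingEnd ℂ) (pt.eval ζ) * p.eval ζ ∂μ = (R : ℂ) := by
    have he : (fun ζ => (starRingEnd ℂ) (pt.eval ζ) * p.eval ζ)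
        = fun ζ => (starRingEnd ℂ) ((starRingEnd ℂ) (p.eval ζ) * pt.eval ζ) := by
      funext ζ; rw [map_mul, Complex.conj_conj, mul_comm]
    rw [he, integral_conj, hI2, Complex.conj_ofReal]
  have haenorm : ∀ᵐ ζ ∂μ, Complex.normSq (pt.eval ζ) = Complex.normSq (p.eval ζ) := by
    filter_upwards [hcirc] with ζ hζ
    have hnrm : ‖pt.eval ζ‖ = ‖p.eval ζ‖ := by
      rw [hptdef, hq]
      simp only [Polynomial.eval_mul, Polynomial.eval_sub, Polynomial.eval_one,
        Polynomial.eval_C, Polynomial.eval_X, norm_mul]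
      rw [hτnorm, one_mul, unimod ζ z hζ]
    rw [Complex.normSq_eq_norm_sq, Complex.normSq_eq_norm_sq, hnrm]
  have hI4 : ∫ ζ, (starRingEnd ℂ) (pt.eval ζ) * pt.eval ζ ∂μ = (R : ℂ) := by
    rw [← hI1]
    refine integral_congr_ae ?_
    filter_upwards [haenorm] with ζ hζ
    rw [mul_comm, Complex.mul_conj, mul_comm ((starRingEnd ℂ) (p.eval ζ)), Complex.mul_conj, hζ]
  have hInt : ∀ f g : Polynomial ℂ,
      Integrable (fun ζ => (starRingEnd ℂ) (f.eval ζ) * g.eval ζ) μ :=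
    fun f g => integrable_aux μ hcirc
      ((Complex.continuous_conj.comp f.continuous).mul g.continuous)
  have hzero : ∫ ζ, (starRingEnd ℂ) ((pt - p).eval ζ) * (pt - p).eval ζ ∂μ = 0 := by
    have e : ∫ ζ, (starRingEnd ℂ) ((pt - p).eval ζ) * (pt - p).eval ζ ∂μ
        = ((∫ ζ, (starRingEnd ℂ) (pt.eval ζ) * pt.eval ζ ∂μ)
            - ∫ ζ, (starRingEnd ℂ) (pt.eval ζ) * p.eval ζ ∂μ)
          - ((∫ ζ, (starRingEnd ℂ) (p.eval ζ) * pt.eval ζ ∂μ)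
            - ∫ ζ, (starRingEnd ℂ) (p.eval ζ) * p.eval ζ ∂μ) := by
      have hfa : Integrable (fun ζ => (starRingEnd ℂ) (pt.eval ζ) * pt.eval ζ
          - (starRingEnd ℂ) (pt.eval ζ) * p.eval ζ) μ := (hInt pt pt).sub (hInt pt p)
      have hfb : Integrable (fun ζ => (starRingEnd ℂ) (p.eval ζ) * pt.eval ζ
          - (starRingEnd ℂ) (p.eval ζ) * p.eval ζ) μ := (hInt p pt).sub (hInt p p)
      have e0 : ∫ ζ, (starRingEnd ℂ) ((pt - p).eval ζ) * (pt - p).eval ζ ∂μ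
          = ∫ ζ, (((starRingEnd ℂ) (pt.eval ζ) * pt.eval ζ
              - (starRingEnd ℂ) (pt.eval ζ) * p.eval ζ)
            - ((starRingEnd ℂ) (p.eval ζ) * pt.eval ζ
              - (starRingEnd ℂ) (p.eval ζ) * p.eval ζ)) ∂μ := by
        refine integral_congr_ae (Filter.Eventually.of_forall fun ζ => ?_)
        show (starRingEnd ℂ) ((pt - p).eval ζ) * (pt - p).eval ζ = _
        simp only [Polynomial.eval_sub, map_sub]; ring
      rw [e0, integral_sub hfa hfb, integral_sub (hInt pt pt) (hInt pt p),
        integral_sub (hInt p pt) (hInt p p)]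
    rw [e, hI1, hI2, hI3, hI4]
    ring
  have hreal : ∫ ζ, Complex.normSq ((pt - p).eval ζ) ∂μ = 0 := by
    have h1 : ∫ ζ, (↑(Complex.normSq ((pt - p).eval ζ)) : ℂ) ∂μ = 0 := by
      rw [← hzero]
      refine integral_congr_ae (Filter.Eventually.of_forall fun ζ => ?_)
      show (↑(Complex.normSq ((pt - p).eval ζ)) : ℂ)
          = (starRingEnd ℂ) ((pt - p).eval ζ) * (pt - p).eval ζ
      rw [mul_comm, Complex.mul_conj]
    have h2 : (↑(∫ ζ, Complex.normSq ((pt - p).eval ζ) ∂μ) : ℂ) = 0 :=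
      (integral_ofReal (f := fun ζ => Complex.normSq ((pt - p).eval ζ))).symm.trans h1
    exact_mod_cast h2
  have haez : ∀ᵐ ζ ∂μ, (pt - p).eval ζ = 0 := by
    have hintns : Integrable (fun ζ : ℂ => Complex.normSq ((pt - p).eval ζ)) μ :=
      integrable_aux μ hcirc (Complex.continuous_normSq.comp (pt - p).continuous)
    have hnn : 0 ≤ fun ζ : ℂ => Complex.normSq ((pt - p).eval ζ) :=
      fun ζ => Complex.normSq_nonneg ((pt - p).eval ζ)
    have h0 := (integral_eq_zero_iff_of_nonneg hnn hintns).mp hreal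
    filter_upwards [h0] with ζ hζ
    exact Complex.normSq_eq_zero.mp hζ
  have hpteq : pt = p := sub_eq_zero.mp (poly_eq_zero_of_ae μ hnt (pt - p) haez)
  have hfac : (Polynomial.C τ * (1 - Polynomial.C ((starRingEnd ℂ) z) * Polynomial.X)) * q
      = (Polynomial.X - Polynomial.C z) * q := by
    rw [← hptdef, hpteq, hq]
  have hAB := mul_right_cancel₀ hqne hfac
  have h0c := congrArg (fun r => Polynomial.coeff r 0) hAB
  have h1c := congrArg (fun r => Polynomial.coeff r 1) hAB
  simp only [Polynomial.coeff_sub, Polynomial.coeff_one, Polynomial.coeff_C,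
    Polynomial.coeff_C_mul, Polynomial.coeff_X_zero, Polynomial.coeff_X_one,
    Polynomial.coeff_X, Polynomial.mul_coeff_zero] at h0c h1c
  have hzz : z * (starRingEnd ℂ) z = 1 := by
    simp at h0c h1c
    linear_combination (starRingEnd ℂ) z * h0c + h1c
  have hns : Complex.normSq z = 1 := by
    have h := hzz
    rw [Complex.mul_conj] at h
    exact_mod_cast h
  have h2 : ‖z‖ ^ 2 = 1 := by
    rw [Complex.sq_norm, hns]
  nlinarith [norm_nonneg z]
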